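/- (Golod) Let m ≥ 1 and let S be a set of words over an m-letter alphabet Σ, each word of S having length at least 2. Suppose (c_i)_{i ≥ 2} are natural numbers such that for each i ≥ 2, S contains at most c_i words of length i. Let G(x) = Σ_{n ≥ 0} b_n x^n be the formal power series inverse of 1 − m x + Σ_{i ≥ 2} c_i x^i (over the rationals). If b_n ≥ 0 for all n ≥ 0, then for every n ≥ 0 the number of words of length n over Σ having no factor in S is at least b_n. -/

import Mathlib

open Set Finset

lemma my_ncard_biUnion_le {α β : Type*} (t : Finset β) (f : β → Set α) :
    (⋃ i ∈ t, f i).ncard ≤ ∑ i ∈ t, (f i).ncard := by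
  classical
  induction t using Finset.induction with
  | empty => simp
  | insert _ _ h ih =>
    rw [Finset.set_biUnion_insert, Finset.sum_insert h]
    exact (Set.ncard_union_le _ _).trans (add_le_add_right ih _)

lemma my_ncard_prod {α β : Type*} (s : Set α) (t : Set β) :
    (s ×ˢ t).ncard = s.ncard * t.ncard := by
  rw [← Nat.card_coe_set_eq, ← Nat.card_coe_set_eq, ← Nat.card_coe_set_eq,
    ← Nat.card_prod]
  exact Nat.card_congr (Equiv.Set.prod s t)

section
variable (m : ℕ) (S : Set (List (Fin m)))

def Av (n : ℕ) : Set (List (Fin m)) := {w | w.length = n ∧ ∀ x, x <:+: w → x ∉ S}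

lemma av_finite (n : ℕ) : (Av m S n).Finite :=
  (List.finite_length_eq _ n).subset (fun _ hw => hw.1)

lemma sfin_finite (i : ℕ) : ({w ∈ S | w.length = i}).Finite :=
  (List.finite_length_eq _ i).subset (fun _ hw => hw.2)

set_option maxHeartbeats 1000000 in
lemma golod_count (hS : ∀ w ∈ S, 2 ≤ w.length) (n : ℕ) :
    m * (Av m S n).ncard ≤ (Av m S (n+1)).ncard +
      ∑ i ∈ Finset.Icc 2 (n+1), ({w ∈ S | w.length = i}).ncard * (Av m S (n+1-i)).ncard := by
  classical
  set W : Set (List (Fin m)) :=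
    (fun p : List (Fin m) × Fin m => p.1 ++ [p.2]) '' (Av m S n ×ˢ Set.univ) with hW
  set B : ℕ → Set (List (Fin m)) := fun i =>
    (fun p : List (Fin m) × List (Fin m) => p.1 ++ p.2) ''
      (Av m S (n+1-i) ×ˢ {w ∈ S | w.length = i}) with hB
  -- step 1 : m * A n = ncard W
  have h1 : m * (Av m S n).ncard = W.ncard := by
    rw [hW, Set.ncard_image_of_injOn, my_ncard_prod, Set.ncard_univ, Nat.card_eq_fintype_card,
      Fintype.card_fin, mul_comm]
    rintro ⟨u, a⟩ ⟨hu, -⟩ ⟨v, b⟩ ⟨hv, -⟩ h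
    simp only at h
    obtain ⟨h1, h2⟩ := List.append_inj h (hu.1.trans hv.1.symm)
    simp only [List.cons.injEq] at h2
    exact Prod.ext h1 h2.1
  -- step 2 : inclusion
  have h2 : W ⊆ Av m S (n+1) ∪ ⋃ i ∈ Finset.Icc 2 (n+1), B i := by
    rintro w ⟨⟨u, a⟩, ⟨hu, -⟩, rfl⟩
    simp only at *
    have hlen : (u ++ [a]).length = n + 1 := by simp [hu.1]
    by_cases hav : ∀ x, x <:+: u ++ [a] → x ∉ S
    · exact Or.inl ⟨hlen, hav⟩
    push_neg at hav
    obtain ⟨x, ⟨p, q, hpq⟩, hxS⟩ := hav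
    rcases q.eq_nil_or_concat with rfl | ⟨q', b, rfl⟩
    · -- x is a suffix : w = p ++ x
      right
      have hxl : x.length ≥ 2 := hS x hxS
      have hplen : p.length + x.length = n + 1 := by
        have := congrArg List.length hpq
        simpa [hu.1] using this
      refine Set.mem_biUnion (Finset.mem_Icc.mpr ⟨hxl, by omega⟩) ?_
      have hul : u.length = n := hu.1
      have hpu : p <+: u := by
        have h1 : p <+: u ++ [a] := ⟨x, by simpa using hpq⟩
        have h2 : u <+: u ++ [a] := ⟨[a], rfl⟩
        exact List.prefix_of_prefix_length_le h1 h2 (by omega)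
      refine ⟨(p, x), ⟨⟨show p.length = n + 1 - x.length by omega, ?_⟩, hxS, rfl⟩, by simpa using hpq⟩
      intro y hy
      exact hu.2 y (hy.trans hpu.isInfix)
    · -- x is an infix of u
      exfalso
      have hpq' : (p ++ x ++ q') ++ [b] = u ++ [a] := by
        simpa [List.append_assoc] using hpq
      obtain ⟨h1, -⟩ := List.append_inj' hpq' rfl
      exact hu.2 x ⟨p, q', h1⟩ hxS
  -- step 3 : put together
  have hfin : (Av m S (n+1) ∪ ⋃ i ∈ Finset.Icc 2 (n+1), B i).Finite := by
    refine (av_finite m S (n+1)).union (Set.Finite.biUnion (Finset.Icc 2 (n+1)).finite_toSet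
      fun i _ => ?_)
    exact (((av_finite m S (n+1-i)).prod (sfin_finite m S i)).image _)
  calc m * (Av m S n).ncard = W.ncard := h1
    _ ≤ _ := Set.ncard_le_ncard h2 hfin
    _ ≤ (Av m S (n+1)).ncard + (⋃ i ∈ Finset.Icc 2 (n+1), B i).ncard := Set.ncard_union_le _ _
    _ ≤ (Av m S (n+1)).ncard + ∑ i ∈ Finset.Icc 2 (n+1), (B i).ncard :=
        add_le_add_right (my_ncard_biUnion_le _ _) _
    _ ≤ _ := by
        refine add_le_add_right (Finset.sum_le_sum fun i _ => ?_) _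
        rw [hB]
        calc ((fun p : List (Fin m) × List (Fin m) => p.1 ++ p.2) ''
              (Av m S (n+1-i) ×ˢ {w ∈ S | w.length = i})).ncard
            ≤ (Av m S (n+1-i) ×ˢ {w ∈ S | w.length = i}).ncard :=
              Set.ncard_image_le ((av_finite m S (n+1-i)).prod (sfin_finite m S i))
          _ = _ := by rw [my_ncard_prod, mul_comm]
end

set_option maxHeartbeats 1000000 in
theorem golod (m : ℕ) (hm : 1 ≤ m) (S : Set (List (Fin m)))
    (hS : ∀ w ∈ S, 2 ≤ w.length) (c : ℕ → ℕ)
    (hc : ∀ i, 2 ≤ i → ({w ∈ S | w.length = i}).ncard ≤ c i)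
    (b : ℕ → ℚ)
    (hinv : PowerSeries.mk b *
      PowerSeries.mk (fun i => if i = 0 then 1 else if i = 1 then -(m : ℚ) else (c i : ℚ))
        = 1)
    (hb : ∀ n, 0 ≤ b n) :
    ∀ n : ℕ,
      b n ≤ ({w : List (Fin m) | w.length = n ∧ ∀ x, x <:+: w → x ∉ S}).ncard := by
  classical
  set g : ℕ → ℚ := fun i => if i = 0 then 1 else if i = 1 then -(m : ℚ) else (c i : ℚ) with hg
  set A : ℕ → ℚ := fun n => ((Av m S n).ncard : ℚ) with hA
  set E : PowerSeries ℚ := PowerSeries.mk A * PowerSeries.mk g with hE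
  clear_value g A E
  -- A 0 = 1
  have hav0 : Av m S 0 = {([] : List (Fin m))} := by
    ext w
    constructor
    · rintro ⟨h1, -⟩; exact List.length_eq_zero_iff.mp h1
    · rintro rfl
      refine ⟨rfl, fun x hx hxS => ?_⟩
      have := hS x hxS
      have := hx.length_le
      simp only [List.length_nil] at this; omega
  have hA0 : A 0 = 1 := by rw [hA]; simp [hav0]
  -- coefficients of E are nonnegative, coeff 0 = 1
  have he0 : PowerSeries.coeff 0 E = 1 := by
    rw [hE, PowerSeries.coeff_mul]
    simp [hA0, hg]
  have hek : ∀ k, 0 ≤ PowerSeries.coeff k E := by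
    intro k
    match k with
    | 0 => rw [he0]; norm_num
    | n+1 =>
      rw [hE, PowerSeries.coeff_mul]
      rw [Finset.Nat.sum_antidiagonal_eq_sum_range_succ_mk]
      simp only [PowerSeries.coeff_mk]
      rw [Finset.sum_range_succ, Finset.sum_range_succ]
      have hgn : ∀ k ∈ Finset.range n, A k * g (n + 1 - k) = (c (n+1-k) : ℚ) * A k := by
        intro k hk
        have hk' := Finset.mem_range.mp hk
        rw [hg]
        simp only
        rw [if_neg (by omega), if_neg (by omega), mul_comm]
      rw [Finset.sum_congr rfl hgn]
      have hg0 : g (n + 1 - (n+1)) = 1 := by rw [hg]; simp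
      have hg1 : g (n + 1 - n) = -(m:ℚ) := by rw [hg]; simp
      rw [hg0, hg1, mul_one]
      -- now : 0 ≤ ∑ k in range n, c (n+1-k) * A k + A n * (-m) + A (n+1)
      have key : (m : ℚ) * A n ≤ A (n+1) + ∑ k ∈ Finset.range n, (c (n+1-k) : ℚ) * A k := by
        have h1 := golod_count m S hS n
        have h2 : ∑ i ∈ Finset.Icc 2 (n+1), ({w ∈ S | w.length = i}).ncard * (Av m S (n+1-i)).ncard
            ≤ ∑ i ∈ Finset.Icc 2 (n+1), c i * (Av m S (n+1-i)).ncard :=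
          Finset.sum_le_sum fun i hi =>
            Nat.mul_le_mul_right _ (hc i (Finset.mem_Icc.mp hi).1)
        have h3 : ∑ i ∈ Finset.Icc 2 (n+1), c i * (Av m S (n+1-i)).ncard
            = ∑ k ∈ Finset.range n, c (n+1-k) * (Av m S k).ncard := by
          refine Finset.sum_nbij' (fun i => n+1-i) (fun k => n+1-k) ?_ ?_ ?_ ?_ ?_
          · intro i hi; simp only [Finset.mem_Icc] at hi; simp only [Finset.mem_range]; omega
          · intro k hk; simp only [Finset.mem_range] at hk; simp only [Finset.mem_Icc]; omega
          · intro i hi; simp only [Finset.mem_Icc] at hi; omega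
          · intro k hk; simp only [Finset.mem_range] at hk; omega
          · intro i hi; simp only [Finset.mem_Icc] at hi
            have h4 : n + 1 - (n + 1 - i) = i := by omega
            simp only [h4]
        have := (h1.trans (Nat.add_le_add_left (h2.trans_eq h3) _))
        have := Nat.cast_le (α := ℚ) |>.mpr this
        push_cast at this
        simp only [hA]
        exact_mod_cast this
      linarith
  -- conclude
  have hmkA : PowerSeries.mk A = E * PowerSeries.mk b := by
    calc PowerSeries.mk A
        = PowerSeries.mk A * (PowerSeries.mk b * PowerSeries.mk g) := by rw [hinv, mul_one]
      _ = E * PowerSeries.mk b := by rw [hE]; ring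
  intro n
  set eco : ℕ → ℚ := fun k => PowerSeries.coeff k E with heco
  clear_value eco
  have hAn : A n = ∑ p ∈ Finset.HasAntidiagonal.antidiagonal n, eco p.1 * b p.2 := by
    conv_lhs => rw [← PowerSeries.coeff_mk n A, hmkA]
    rw [PowerSeries.coeff_mul]
    rw [heco]
    simp [PowerSeries.coeff_mk]
  have hsingle : eco 0 * b n
      ≤ ∑ p ∈ Finset.HasAntidiagonal.antidiagonal n, eco p.1 * b p.2 := by
    refine Finset.single_le_sum (f := fun p : ℕ × ℕ => eco p.1 * b p.2) (a := ((0:ℕ), n)) ?_ ?_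
    · intro p _
      refine mul_nonneg ?_ (hb p.2)
      rw [heco]
      exact hek p.1
    · simp
  have heco0 : eco 0 = 1 := by simp only [heco]; exact he0
  rw [heco0, one_mul] at hsingle
  have hfinal : b n ≤ A n := by rw [hAn]; exact hsingle
  rw [hA] at hfinal
  simpa [Av] using hfinal
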